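/- Fix real numbers b1,…,b5. There exists ε > 0 such that for every real t0 with 0 < |t0| < ε, the series ∑_{n≥1} (t0^{2n}/n)·D(n) converges and (1/(2π))·∫_0^{2π} log‖1 − g_{t0}(e^{iθ})‖ dθ = −∑_{n≥1} (t0^{2n}/n)·D(n). -/

import Mathlib

open Real Finset

/-- `g_{t₀}(w) = t₀²(w⁻¹ + b₁ + b₂w + b₃w² + b₄w³ + b₅w⁴)`. -/
noncomputable def gfun (b1 b2 b3 b4 b5 t0 : ℝ) (w : ℂ) : ℂ :=
  (t0 : ℂ) ^ 2 * (w⁻¹ + (b1 : ℂ) + (b2 : ℂ) * w + (b3 : ℂ) * w ^ 2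
      + (b4 : ℂ) * w ^ 3 + (b5 : ℂ) * w ^ 4)

/-- `D n = ∑ (n!/(k₀!k₁!k₂!k₃!k₄!k₅!)) b₁^{k₁}b₂^{k₂}b₃^{k₃}b₄^{k₄}b₅^{k₅}`, the sum over
all `(k₀,…,k₅) ∈ ℕ⁶` with `k₀+k₁+k₂+k₃+k₄+k₅ = n` and `k₁+2k₂+3k₃+4k₄+5k₅ = n`. -/
noncomputable def Dcoef {R : Type*} [CommRing R] (b1 b2 b3 b4 b5 : R) (n : ℕ) : R :=
  ∑ k ∈ (Fintype.piFinset fun _ : Fin 6 => Finset.range (n + 1)) |>.filter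
      (fun k => (∑ i, k i) = n ∧ k 1 + 2 * k 2 + 3 * k 3 + 4 * k 4 + 5 * k 5 = n),
    (Nat.multinomial Finset.univ k : R) *
      (b1 ^ k 1 * b2 ^ k 2 * b3 ^ k 3 * b4 ^ k 4 * b5 ^ k 5)

noncomputable def cv (b1 b2 b3 b4 b5 : ℝ) : Fin 6 → ℂ := ![1, b1, b2, b3, b4, b5]

def ev : Fin 6 → ℤ := ![-1, 0, 1, 2, 3, 4]

lemma gfun_eq (b1 b2 b3 b4 b5 t0 θ : ℝ) :
    gfun b1 b2 b3 b4 b5 t0 (Complex.exp (θ * Complex.I)) =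
      (t0 : ℂ)^2 * ∑ j, cv b1 b2 b3 b4 b5 j * Complex.exp ((ev j : ℂ) * θ * Complex.I) := by
  have key : ∀ m : ℤ, Complex.exp ((m : ℂ) * θ * Complex.I) =
      Complex.exp ((θ:ℂ) * Complex.I) ^ m := by
    intro m
    rw [mul_assoc, Complex.exp_int_mul]
  simp only [gfun, cv, ev, Fin.sum_univ_six]
  have e0 : (![(-1:ℤ), 0, 1, 2, 3, 4] 0) = -1 := rfl
  have e1 : (![(-1:ℤ), 0, 1, 2, 3, 4] 1) = 0 := rfl
  have e2 : (![(-1:ℤ), 0, 1, 2, 3, 4] 2) = 1 := rfl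
  have e3 : (![(-1:ℤ), 0, 1, 2, 3, 4] 3) = 2 := rfl
  have e4 : (![(-1:ℤ), 0, 1, 2, 3, 4] 4) = 3 := rfl
  have e5 : (![(-1:ℤ), 0, 1, 2, 3, 4] 5) = 4 := rfl
  have c0 : (![(1:ℂ), b1, b2, b3, b4, b5] 0) = 1 := rfl
  have c1 : (![(1:ℂ), b1, b2, b3, b4, b5] 1) = b1 := rfl
  have c2 : (![(1:ℂ), b1, b2, b3, b4, b5] 2) = b2 := rfl
  have c3 : (![(1:ℂ), b1, b2, b3, b4, b5] 3) = b3 := rfl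
  have c4 : (![(1:ℂ), b1, b2, b3, b4, b5] 4) = b4 := rfl
  have c5 : (![(1:ℂ), b1, b2, b3, b4, b5] 5) = b5 := rfl
  rw [e0, e1, e2, e3, e4, e5, c0, c1, c2, c3, c4, c5]
  have keyn : ∀ m : ℕ, Complex.exp (((m:ℤ) : ℂ) * θ * Complex.I) =
      Complex.exp ((θ:ℂ) * Complex.I) ^ m := by
    intro m
    rw [mul_assoc]
    push_cast
    rw [Complex.exp_nat_mul]
  rw [key (-1)]
  rw [zpow_neg_one]
  rw [show ((0:ℤ)) = ((0:ℕ):ℤ) from rfl, show ((1:ℤ)) = ((1:ℕ):ℤ) from rfl,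
    show ((2:ℤ)) = ((2:ℕ):ℤ) from rfl, show ((3:ℤ)) = ((3:ℕ):ℤ) from rfl,
    show ((4:ℤ)) = ((4:ℕ):ℤ) from rfl, keyn 0, keyn 1, keyn 2, keyn 3, keyn 4]
  rw [pow_zero, pow_one]
  ring

lemma set_eq (n : ℕ) :
    (piAntidiag (univ : Finset (Fin 6)) n).filter
        (fun k => (∑ j, (k j : ℤ) * ev j) = 0) =
      ((Fintype.piFinset fun _ : Fin 6 => Finset.range (n + 1)).filter
        (fun k => (∑ i, k i) = n ∧ k 1 + 2 * k 2 + 3 * k 3 + 4 * k 4 + 5 * k 5 = n)) := by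
  ext k
  simp only [mem_filter, Finset.mem_piAntidiag, Fintype.mem_piFinset, Finset.mem_range,
    Fin.sum_univ_six, ev]
  have e0 : (![(-1:ℤ), 0, 1, 2, 3, 4] 0) = -1 := rfl
  have e1 : (![(-1:ℤ), 0, 1, 2, 3, 4] 1) = 0 := rfl
  have e2 : (![(-1:ℤ), 0, 1, 2, 3, 4] 2) = 1 := rfl
  have e3 : (![(-1:ℤ), 0, 1, 2, 3, 4] 3) = 2 := rfl
  have e4 : (![(-1:ℤ), 0, 1, 2, 3, 4] 4) = 3 := rfl
  have e5 : (![(-1:ℤ), 0, 1, 2, 3, 4] 5) = 4 := rfl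
  rw [e0, e1, e2, e3, e4, e5]
  constructor
  · rintro ⟨⟨hsum, -⟩, hz⟩
    refine ⟨fun i => ?_, hsum, by omega⟩
    have hle : k i ≤ k 0 + k 1 + k 2 + k 3 + k 4 + k 5 := by
      have h2 : k i ≤ ∑ j, k j :=
        Finset.single_le_sum (fun j _ => Nat.zero_le _) (mem_univ i)
      simpa [Fin.sum_univ_six] using h2
    omega
  · rintro ⟨hb, hsum, hw⟩
    refine ⟨⟨hsum, fun i _ => mem_univ i⟩, ?_⟩
    omega

lemma integral_exp_int (m : ℤ) :
    ∫ θ in (0:ℝ)..(2*π), Complex.exp ((m : ℂ) * θ * Complex.I) =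
      if m = 0 then ((2*π : ℝ) : ℂ) else 0 := by
  have key : ∀ θ : ℝ, (m : ℂ) * θ * Complex.I = ((m : ℂ) * Complex.I) * θ := by
    intro θ; ring
  simp_rw [key]
  rcases eq_or_ne m 0 with rfl | hm
  · simp
  · have hc : (m : ℂ) * Complex.I ≠ 0 := by
      simp [Complex.I_ne_zero, Int.cast_eq_zero, hm]
    rw [integral_exp_mul_complex hc, if_neg hm]
    have h1 : (m : ℂ) * Complex.I * ((2*π : ℝ) : ℂ) = (m : ℂ) * (2 * π * Complex.I) := by
      push_cast; ring
    rw [h1, Complex.exp_int_mul_two_pi_mul_I]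
    simp

lemma integral_gpow (b1 b2 b3 b4 b5 t0 : ℝ) (n : ℕ) :
    ∫ θ in (0:ℝ)..(2*π), (gfun b1 b2 b3 b4 b5 t0 (Complex.exp (θ * Complex.I)))^n
      = (((t0 ^ (2*n) * (2*π) * Dcoef b1 b2 b3 b4 b5 n : ℝ)) : ℂ) := by
  set S : (Fin 6 → ℕ) → ℤ := fun k => ∑ j, (k j : ℤ) * ev j with hS
  have expand : ∀ θ : ℝ, (gfun b1 b2 b3 b4 b5 t0 (Complex.exp (θ * Complex.I)))^n =
      ((t0:ℂ)^2)^n * ∑ k ∈ piAntidiag (univ : Finset (Fin 6)) n,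
        ((Nat.multinomial Finset.univ k : ℂ) * ∏ j, cv b1 b2 b3 b4 b5 j ^ k j) *
          Complex.exp ((S k : ℂ) * θ * Complex.I) := by
    intro θ
    rw [gfun_eq, mul_pow, sum_pow_eq_sum_piAntidiag]
    congr 1
    refine Finset.sum_congr rfl fun k hk => ?_
    rw [mul_assoc]
    congr 1
    simp_rw [mul_pow]
    rw [Finset.prod_mul_distrib]
    congr 1
    simp_rw [← Complex.exp_nat_mul]
    rw [← Complex.exp_sum]
    congr 1
    rw [hS]
    push_cast
    rw [Finset.sum_mul, Finset.sum_mul]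
    exact Finset.sum_congr rfl fun j _ => by ring
  simp_rw [expand]
  rw [intervalIntegral.integral_const_mul, intervalIntegral.integral_finset_sum]
  swap
  · intro k _
    apply Continuous.intervalIntegrable
    exact continuous_const.mul (Complex.continuous_exp.comp (by continuity))
  have key : ∀ k ∈ piAntidiag (univ : Finset (Fin 6)) n,
      (∫ θ in (0:ℝ)..(2*π),
        ((Nat.multinomial Finset.univ k : ℂ) * ∏ j, cv b1 b2 b3 b4 b5 j ^ k j) *
          Complex.exp ((S k : ℂ) * θ * Complex.I))
      = ((Nat.multinomial Finset.univ k : ℂ) * ∏ j, cv b1 b2 b3 b4 b5 j ^ k j) *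
          (if S k = 0 then ((2*π:ℝ):ℂ) else 0) := by
    intro k _
    rw [intervalIntegral.integral_const_mul, integral_exp_int]
  rw [Finset.sum_congr rfl key]
  simp_rw [mul_ite, mul_zero]
  rw [Finset.sum_ite, Finset.sum_const_zero, add_zero]
  rw [show (filter (fun k => S k = 0) (piAntidiag (univ : Finset (Fin 6)) n)) =
      ((Fintype.piFinset fun _ : Fin 6 => Finset.range (n + 1)).filter
        (fun k => (∑ i, k i) = n ∧ k 1 + 2 * k 2 + 3 * k 3 + 4 * k 4 + 5 * k 5 = n)) from
    set_eq n]
  rw [Dcoef]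
  push_cast
  rw [Finset.mul_sum, Finset.mul_sum]
  refine Finset.sum_congr rfl fun k hk => ?_
  have c0 : (![(1:ℂ), b1, b2, b3, b4, b5] 0) = 1 := rfl
  have c1 : (![(1:ℂ), b1, b2, b3, b4, b5] 1) = b1 := rfl
  have c2 : (![(1:ℂ), b1, b2, b3, b4, b5] 2) = b2 := rfl
  have c3 : (![(1:ℂ), b1, b2, b3, b4, b5] 3) = b3 := rfl
  have c4 : (![(1:ℂ), b1, b2, b3, b4, b5] 4) = b4 := rfl
  have c5 : (![(1:ℂ), b1, b2, b3, b4, b5] 5) = b5 := rfl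
  have hprod : (∏ j, cv b1 b2 b3 b4 b5 j ^ k j) =
      ((b1:ℂ) ^ k 1 * (b2:ℂ) ^ k 2 * (b3:ℂ) ^ k 3 * (b4:ℂ) ^ k 4 * (b5:ℂ) ^ k 5) := by
    rw [Fin.prod_univ_six]
    simp only [cv, c0, c1, c2, c3, c4, c5, one_pow]
    ring
  rw [hprod, ← pow_mul]
  push_cast
  ring

theorem stmt8 (b1 b2 b3 b4 b5 : ℝ) :
    ∃ ε > (0 : ℝ), ∀ t0 : ℝ, 0 < |t0| → |t0| < ε →
      HasSum (fun n : ℕ => t0 ^ (2 * (n + 1)) / (n + 1) * Dcoef b1 b2 b3 b4 b5 (n + 1))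
        (-((1 / (2 * π)) * ∫ θ in (0 : ℝ)..(2 * π),
            Real.log ‖(1 : ℂ) - gfun b1 b2 b3 b4 b5 t0 (Complex.exp (θ * Complex.I))‖)) := by
  set M : ℝ := 1 + |b1| + |b2| + |b3| + |b4| + |b5| with hM
  have hM1 : 1 ≤ M := by
    have : (0:ℝ) ≤ |b1| + |b2| + |b3| + |b4| + |b5| := by positivity
    rw [hM]; linarith
  have hMpos : 0 < M := by linarith
  refine ⟨1 / M, by positivity, fun t0 ht0 htε => ?_⟩
  set g : ℝ → ℂ := fun θ => gfun b1 b2 b3 b4 b5 t0 (Complex.exp (θ * Complex.I)) with hg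
  set r : ℝ := t0 ^ 2 * M with hr
  have hr0 : 0 ≤ r := by positivity
  have hr1 : r < 1 := by
    have h1 : t0 ^ 2 < (1 / M) ^ 2 := by
      have := sq_abs t0
      nlinarith [abs_nonneg t0]
    have h2 : (1 / M) ^ 2 * M = 1 / M := by field_simp
    have h3 : r < (1 / M) ^ 2 * M := by
      rw [hr]; exact mul_lt_mul_of_pos_right h1 hMpos
    rw [h2] at h3
    calc r < 1 / M := h3
    _ ≤ 1 := by rw [div_le_one hMpos]; exact hM1
  -- norm bound
  have hgb : ∀ θ : ℝ, ‖g θ‖ ≤ r := by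
    intro θ
    have habs : ∀ k : ℕ, ‖Complex.exp ((θ:ℂ) * Complex.I) ^ k‖ = 1 := by
      intro k; rw [norm_pow, Complex.norm_exp_ofReal_mul_I, one_pow]
    have habsinv : ‖(Complex.exp ((θ:ℂ) * Complex.I))⁻¹‖ = 1 := by
      rw [norm_inv, Complex.norm_exp_ofReal_mul_I, inv_one]
    rw [hg]
    unfold gfun
    rw [hr]
    rw [norm_mul]
    have h1 : ‖((t0:ℂ))^2‖ = t0 ^ 2 := by
      rw [norm_pow, Complex.norm_real, Real.norm_eq_abs, sq_abs]
    rw [h1]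
    refine mul_le_mul_of_nonneg_left ?_ (by positivity)
    calc ‖(Complex.exp ((θ:ℂ) * Complex.I))⁻¹ + (b1:ℂ) + (b2:ℂ) * Complex.exp ((θ:ℂ) * Complex.I)
          + (b3:ℂ) * Complex.exp ((θ:ℂ) * Complex.I) ^ 2
          + (b4:ℂ) * Complex.exp ((θ:ℂ) * Complex.I) ^ 3
          + (b5:ℂ) * Complex.exp ((θ:ℂ) * Complex.I) ^ 4‖
        ≤ ‖(Complex.exp ((θ:ℂ) * Complex.I))⁻¹‖ + ‖(b1:ℂ)‖
          + ‖(b2:ℂ) * Complex.exp ((θ:ℂ) * Complex.I)‖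
          + ‖(b3:ℂ) * Complex.exp ((θ:ℂ) * Complex.I) ^ 2‖
          + ‖(b4:ℂ) * Complex.exp ((θ:ℂ) * Complex.I) ^ 3‖
          + ‖(b5:ℂ) * Complex.exp ((θ:ℂ) * Complex.I) ^ 4‖ := by
          refine norm_add_le_of_le (norm_add_le_of_le (norm_add_le_of_le
            (norm_add_le_of_le (norm_add_le _ _) le_rfl) le_rfl) le_rfl) le_rfl
      _ = M := by
          simp only [norm_mul, habs, habsinv, mul_one]
          rw [hM]
          simp [Complex.norm_real]
  -- continuity of g
  have hw : Continuous fun θ : ℝ => Complex.exp ((θ:ℂ) * Complex.I) := by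
    exact Complex.continuous_exp.comp (by continuity)
  have hwinv : Continuous fun θ : ℝ => (Complex.exp ((θ:ℂ) * Complex.I))⁻¹ :=
    hw.inv₀ (fun θ => Complex.exp_ne_zero _)
  have hc : Continuous g := by
    rw [hg]
    unfold gfun
    exact continuous_const.mul
      (((((hwinv.add continuous_const).add (continuous_const.mul hw)).add
        (continuous_const.mul (hw.pow 2))).add (continuous_const.mul (hw.pow 3))).add
        (continuous_const.mul (hw.pow 4)))
  -- pointwise HasSum of the log series
  have hlog : ∀ θ : ℝ, HasSum (fun n : ℕ => (g θ) ^ (n+1) / ((n:ℂ)+1))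
      (-Complex.log (1 - g θ)) := by
    intro θ
    have hz : ‖g θ‖ < 1 := lt_of_le_of_lt (hgb θ) hr1
    have h := Complex.hasSum_taylorSeries_neg_log hz
    have h0 : (g θ) ^ 0 / ((0:ℕ):ℂ) = 0 := by simp
    have h2 := (hasSum_nat_add_iff' (f := fun n : ℕ => (g θ)^n / (n:ℂ)) 1).mpr h
    simp only [Finset.range_one, Finset.sum_singleton, h0, sub_zero] at h2
    have hfeq : (fun n : ℕ => (g θ) ^ (n+1) / ((n:ℂ)+1)) =
        (fun n : ℕ => (g θ) ^ (n+1) / ((n+1 : ℕ):ℂ)) := by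
      funext n; push_cast; ring_nf
    rw [hfeq]
    exact h2
  -- dominated convergence
  have hDCT : HasSum (fun n : ℕ => ∫ θ in (0:ℝ)..(2*π), (g θ) ^ (n+1) / ((n:ℂ)+1))
      (∫ θ in (0:ℝ)..(2*π), -Complex.log (1 - g θ)) := by
    apply intervalIntegral.hasSum_integral_of_dominated_convergence
      (bound := fun n _ => r ^ (n+1))
    · intro n
      exact ((hc.pow (n+1)).div_const _).aestronglyMeasurable
    · intro n
      filter_upwards with θ _
      rw [norm_div, norm_pow]
      calc ‖g θ‖ ^ (n+1) / ‖((n:ℂ)+1)‖ ≤ ‖g θ‖ ^ (n+1) / 1 := by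
            have h1 : ((1:ℝ)) ≤ ‖((n:ℂ)+1)‖ := by
              have h2 : ((n:ℂ)+1) = ((n+1 : ℕ) : ℂ) := by push_cast; ring
              rw [h2, Complex.norm_natCast]
              exact_mod_cast Nat.one_le_iff_ne_zero.mpr (Nat.succ_ne_zero n)
            apply div_le_div_of_nonneg_left (by positivity) (by norm_num) h1
        _ = ‖g θ‖ ^ (n+1) := by ring
        _ ≤ r ^ (n+1) := pow_le_pow_left₀ (norm_nonneg _) (hgb θ) _
    · filter_upwards with θ _
      exact ((summable_geometric_of_lt_one hr0 hr1).mul_left r).congr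
        (fun n => by rw [pow_succ]; ring)
    · exact intervalIntegrable_const
    · filter_upwards with θ _
      exact hlog θ
  -- evaluate each integral
  have hint : ∀ n : ℕ, (∫ θ in (0:ℝ)..(2*π), (g θ)^(n+1)/((n:ℂ)+1)) =
      (((t0 ^ (2*(n+1)) * (2*π) * Dcoef b1 b2 b3 b4 b5 (n+1)) / ((n:ℝ)+1) : ℝ) : ℂ) := by
    intro n
    rw [intervalIntegral.integral_div]
    simp only [hg]
    rw [integral_gpow]
    push_cast
    ring
  simp only [hint] at hDCT
  have hre := Complex.reCLM.hasSum hDCT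
  simp only [Complex.reCLM_apply, Complex.ofReal_re] at hre
  -- identify the real part of the integral
  have hcl : Continuous fun θ : ℝ => Complex.log (1 - g θ) := by
    rw [continuous_iff_continuousAt]
    intro θ
    have hslit : 1 - g θ ∈ Complex.slitPlane := by
      left
      have h1 : (g θ).re ≤ ‖g θ‖ := Complex.re_le_norm (g θ)
      have h2 : ‖g θ‖ < 1 := lt_of_le_of_lt (hgb θ) hr1
      simp only [Complex.sub_re, Complex.one_re]
      linarith
    have hinner : ContinuousAt (fun θ : ℝ => 1 - g θ) θ := (continuous_const.sub hc).continuousAt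
    have hcomp := ContinuousAt.comp (f := fun θ : ℝ => 1 - g θ) (x := θ)
      (continuousAt_clog hslit) hinner
    exact hcomp
  have hii : IntervalIntegrable (fun θ : ℝ => -Complex.log (1 - g θ)) MeasureTheory.volume
      0 (2*π) := hcl.neg.intervalIntegrable _ _
  have hre2 : (∫ θ in (0:ℝ)..(2*π), -Complex.log (1 - g θ)).re =
      -∫ θ in (0:ℝ)..(2*π), Real.log ‖(1:ℂ) - g θ‖ := by
    rw [← Complex.reCLM_apply, ← ContinuousLinearMap.intervalIntegral_comp_comm _ hii]
    rw [← intervalIntegral.integral_neg]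
    congr 1
    funext θ
    simp only [Complex.reCLM_apply, Complex.neg_re, Complex.log_re]
  rw [hre2] at hre
  -- final rescaling
  have hfin := hre.div_const (2*π)
  have hπ : (2*π) ≠ 0 := by positivity
  have hfe : (fun n : ℕ => (t0 ^ (2*(n+1)) * (2*π) * Dcoef b1 b2 b3 b4 b5 (n+1) / ((n:ℝ)+1))
      / (2*π)) = fun n : ℕ => t0 ^ (2*(n+1)) / ((n:ℝ)+1) * Dcoef b1 b2 b3 b4 b5 (n+1) := by
    funext n
    have hn : ((n:ℝ)+1) ≠ 0 := by positivity
    field_simp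
  rw [hfe] at hfin
  convert hfin using 1
  · rfl
  rw [hg]
  ring
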